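/- Let n, k, m be positive integers and let τ be the interlacing permutation of {0,…,n(k+m)−1} defined by τ(a·k + c) = a·(k+m) + c for 0 ≤ a < n, 0 ≤ c < k, and τ(n·k + a·m + c) = a·(k+m) + k + c for 0 ≤ a < n, 0 ≤ c < m. Then τ can be written as a product of exactly k·m·n(n−1)/2 adjacent transpositions. -/

import Mathlib

open Finset Equiv

private def invSet {N : ℕ} (σ : Equiv.Perm (Fin N)) : Finset (Fin N × Fin N) :=
  Finset.univ.filter fun p => p.1 < p.2 ∧ σ p.2 < σ p.1

private lemma mem_invSet {N : ℕ} {σ : Equiv.Perm (Fin N)} {p : Fin N × Fin N} :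
    p ∈ invSet σ ↔ p.1 < p.2 ∧ σ p.2 < σ p.1 := by
  simp [invSet]

private lemma strictMono_of_no_descent {N : ℕ} (σ : Equiv.Perm (Fin N))
    (h : ∀ i j : Fin N, (j : ℕ) = (i : ℕ) + 1 → σ i < σ j) : StrictMono σ := by
  have key : ∀ d : ℕ, ∀ p q : Fin N, (q : ℕ) = (p : ℕ) + d + 1 → σ p < σ q := by
    intro d
    induction d with
    | zero => intro p q hq; exact h p q (by omega)
    | succ d ih =>
      intro p q hq
      have hq' : (p : ℕ) + d + 1 < N := by omega
      have h1 : σ p < σ ⟨(p : ℕ) + d + 1, hq'⟩ := ih p _ rfl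
      have h2 : σ ⟨(p : ℕ) + d + 1, hq'⟩ < σ q := h _ q (by simp; omega)
      exact h1.trans h2
  intro p q hpq
  have : (q : ℕ) = (p : ℕ) + ((q : ℕ) - (p : ℕ) - 1) + 1 := by
    have := (Fin.lt_def).mp hpq; omega
  exact key _ p q this

private lemma eq_one_of_invSet_empty {N : ℕ} (σ : Equiv.Perm (Fin N))
    (h : invSet σ = ∅) : σ = 1 := by
  have hmono : StrictMono σ := by
    apply strictMono_of_no_descent
    intro i j hij
    have hne : σ i ≠ σ j := fun hh => by
      have := σ.injective hh; subst this; omega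
    rcases lt_or_gt_of_ne hne with h1 | h1
    · exact h1
    · exfalso
      have : (i, j) ∈ invSet σ := mem_invSet.mpr ⟨by simp [Fin.lt_def, hij], h1⟩
      simp [h] at this
  have hid : StrictMono (id : Fin N → Fin N) := strictMono_id
  have hr : Set.range σ = Set.range (id : Fin N → Fin N) := by
    simp [σ.surjective.range_eq]
  have heq := (hmono.range_inj hid).mp hr
  ext x
  simp [show σ x = x from congrFun heq x]

private lemma swap_val {N : ℕ} (i j w : Fin N) :
    Equiv.swap i j w = if w = i then j else if w = j then i else w := by
  rcases eq_or_ne w i with rfl | h1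
  · simp
  · rcases eq_or_ne w j with rfl | h2
    · simp [h1]
    · simp [Equiv.swap_apply_of_ne_of_ne h1 h2, h1, h2]

private lemma card_invSet_mul_swap {N : ℕ} (σ : Equiv.Perm (Fin N)) (i j : Fin N)
    (hij : (j : ℕ) = (i : ℕ) + 1) (hdesc : σ j < σ i) :
    (invSet (σ * Equiv.swap i j)).card + 1 = (invSet σ).card := by
  have hcard : (invSet (σ * Equiv.swap i j)).card =
      (Finset.univ.filter fun p : Fin N × Fin N =>
        Equiv.swap i j p.1 < Equiv.swap i j p.2 ∧ σ p.2 < σ p.1).card := by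
    refine Finset.card_bij' (fun p _ => (Equiv.swap i j p.1, Equiv.swap i j p.2))
      (fun p _ => (Equiv.swap i j p.1, Equiv.swap i j p.2)) ?_ ?_ ?_ ?_
    · intro p hp
      rw [mem_invSet] at hp
      simp only [Equiv.Perm.mul_apply] at hp
      simp only [Finset.mem_filter, Finset.mem_univ, true_and, Equiv.swap_apply_self]
      exact ⟨hp.1, hp.2⟩
    · intro p hp
      simp only [Finset.mem_filter, Finset.mem_univ, true_and] at hp
      rw [mem_invSet]
      simp only [Equiv.Perm.mul_apply, Equiv.swap_apply_self]
      exact ⟨hp.1, hp.2⟩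
    · intro p hp; simp [Equiv.swap_apply_self]
    · intro p hp; simp [Equiv.swap_apply_self]
  rw [hcard]
  have hD : (Finset.univ.filter fun p : Fin N × Fin N =>
      Equiv.swap i j p.1 < Equiv.swap i j p.2 ∧ σ p.2 < σ p.1) =
      (invSet σ).erase (i, j) := by
    ext ⟨u, v⟩
    simp only [Finset.mem_filter, Finset.mem_univ, true_and, Finset.mem_erase, mem_invSet,
      Prod.mk.injEq, ne_eq, not_and]
    rw [swap_val i j u, swap_val i j v]
    have hd' : (σ j : ℕ) < (σ i : ℕ) := hdesc
    split_ifs with h1 h2 h3 h4 h5 h6 <;>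
      (try subst_vars) <;>
      simp only [Fin.lt_def, Fin.ext_iff, ne_eq, not_true_eq_false, true_implies, false_and,
        iff_false, not_and, not_lt] at * <;>
      omega
  rw [hD]
  have hmem : (i, j) ∈ invSet σ := mem_invSet.mpr ⟨by simp [Fin.lt_def, hij], hdesc⟩
  have := Finset.card_erase_of_mem hmem
  have hpos : 0 < (invSet σ).card := Finset.card_pos.mpr ⟨_, hmem⟩
  omega

private lemma exists_adj_list {N : ℕ} :
    ∀ M : ℕ, ∀ σ : Equiv.Perm (Fin N), (invSet σ).card = M →
    ∃ L : List (Equiv.Perm (Fin N)),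
      L.length = M ∧
      (∀ ρ ∈ L, ∃ i j : Fin N, (j : ℕ) = (i : ℕ) + 1 ∧ ρ = Equiv.swap i j) ∧
      L.prod = σ := by
  intro M
  induction M with
  | zero =>
    intro σ hσ
    have : invSet σ = ∅ := Finset.card_eq_zero.mp hσ
    exact ⟨[], rfl, by simp, by simp [eq_one_of_invSet_empty σ this]⟩
  | succ M ih =>
    intro σ hσ
    have hdesc : ∃ i j : Fin N, (j : ℕ) = (i : ℕ) + 1 ∧ σ j < σ i := by
      by_contra hcon
      push_neg at hcon
      have hsm : StrictMono σ := by
        apply strictMono_of_no_descent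
        intro i j hij
        have hle := hcon i j hij
        have hne : σ i ≠ σ j := fun hh => by
          have := σ.injective hh; subst this; omega
        exact lt_of_le_of_ne hle hne
      have hempty : invSet σ = ∅ := by
        ext ⟨p, q⟩
        simp only [mem_invSet, Finset.notMem_empty, iff_false, not_and]
        intro hpq
        exact not_lt.mpr (hsm hpq).le
      rw [hempty] at hσ
      simp at hσ
    obtain ⟨i, j, hij, hd⟩ := hdesc
    have hdec := card_invSet_mul_swap σ i j hij hd
    obtain ⟨L, hL1, hL2, hL3⟩ := ih (σ * Equiv.swap i j) (by omega)
    refine ⟨L ++ [Equiv.swap i j], by simp [hL1], ?_, ?_⟩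
    · intro ρ hρ
      rcases List.mem_append.mp hρ with h | h
      · exact hL2 ρ h
      · simp at h
        exact ⟨i, j, hij, h⟩
    · rw [List.prod_append, hL3]
      simp [mul_assoc]

private lemma blocks_mono {K M : ℕ} (hKM : K ≤ M) (a c a' c' : ℕ)
    (hc : c < K) (hc' : c' < K) (h : a * K + c < a' * K + c') :
    a * M + c < a' * M + c' := by
  have haa : a ≤ a' := by
    by_contra hh
    push_neg at hh
    have : (a' + 1) * K ≤ a * K := Nat.mul_le_mul_right _ hh
    nlinarith
  rcases eq_or_lt_of_le haa with rfl | hlt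
  · omega
  · have h1 : (a + 1) * M ≤ a' * M := Nat.mul_le_mul_right _ hlt
    calc a * M + c < a * M + M := by omega
    _ = (a + 1) * M := by ring
    _ ≤ a' * M := h1
    _ ≤ a' * M + c' := Nat.le_add_right _ _

private lemma div_mod_split {k : ℕ} (hk : 0 < k) (a c a' c' : ℕ)
    (hc : c < k) (hc' : c' < k) (h : a * k + c = a' * k + c') : a = a' ∧ c = c' := by
  have h1 : (a * k + c) / k = a := by
    rw [mul_comm, Nat.mul_add_div hk, Nat.div_eq_of_lt hc]; rfl
  have h2 : (a' * k + c') / k = a' := by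
    rw [mul_comm, Nat.mul_add_div hk, Nat.div_eq_of_lt hc']; rfl
  have ha : a = a' := by rw [← h1, ← h2, h]
  subst ha
  exact ⟨rfl, by omega⟩

private lemma card_lt_pairs (n : ℕ) :
    ((Finset.range n ×ˢ Finset.range n).filter fun ab => ab.2 < ab.1).card = n * (n - 1) / 2 := by
  rw [← Finset.sum_range_id]
  have hfib : ∀ x ∈ (Finset.range n ×ˢ Finset.range n).filter fun ab => ab.2 < ab.1,
      x.1 ∈ Finset.range n := by
    intro x hx
    simp only [Finset.mem_filter, Finset.mem_product] at hx
    exact hx.1.1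
  rw [Finset.card_eq_sum_card_fiberwise hfib]
  apply Finset.sum_congr rfl
  intro a ha
  rw [Finset.mem_range] at ha
  have hset : (((Finset.range n ×ˢ Finset.range n).filter fun ab => ab.2 < ab.1).filter
      fun ab => ab.1 = a) = {a} ×ˢ Finset.range a := by
    ext ⟨x, y⟩
    simp only [Finset.mem_filter, Finset.mem_product, Finset.mem_range, Finset.mem_singleton]
    omega
  rw [hset, Finset.card_product, Finset.card_singleton, Finset.card_range, one_mul]


/-- The interlacing permutation of `{0,…,n(k+m)-1}` (sending position `a*k + c` to
`a*(k+m) + c` for `a < n`, `c < k`, and position `n*k + a*m + c` to `a*(k+m) + k + c`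
for `a < n`, `c < m`) can be written as a product of exactly `k*m*n(n-1)/2` adjacent
transpositions. -/
theorem stmt_8 (n k m : ℕ) (hn : 1 ≤ n) (hk : 1 ≤ k) (hm : 1 ≤ m)
    (τ : Equiv.Perm (Fin (n * (k + m))))
    (hτA : ∀ a c : ℕ, a < n → c < k → ∀ h : a * k + c < n * (k + m),
      ((τ ⟨a * k + c, h⟩ : ℕ)) = a * (k + m) + c)
    (hτB : ∀ a c : ℕ, a < n → c < m → ∀ h : n * k + a * m + c < n * (k + m),
      ((τ ⟨n * k + a * m + c, h⟩ : ℕ)) = a * (k + m) + k + c) :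
    ∃ L : List (Equiv.Perm (Fin (n * (k + m)))),
      L.length = k * m * (n * (n - 1) / 2) ∧
      (∀ ρ ∈ L, ∃ i j : Fin (n * (k + m)), (j : ℕ) = (i : ℕ) + 1 ∧ ρ = Equiv.swap i j) ∧
      L.prod = τ := by
  have hk' : 0 < k := hk
  have hm' : 0 < m := hm
  have hkm : n * (k + m) = n * k + n * m := by ring
  have hckn : k * n = n * k := Nat.mul_comm k n
  have hcmn : m * n = n * m := Nat.mul_comm m n
  -- value of τ on the A side
  have tauA : ∀ p : Fin (n * (k + m)), (p : ℕ) < n * k →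
      (τ p : ℕ) = ((p : ℕ) / k) * (k + m) + (p : ℕ) % k := by
    intro p hp
    have ha : (p : ℕ) / k < n := Nat.div_lt_of_lt_mul (by omega)
    have hc : (p : ℕ) % k < k := Nat.mod_lt _ hk'
    have hpe : ((p : ℕ) / k) * k + (p : ℕ) % k = (p : ℕ) := by
      rw [mul_comm]; exact Nat.div_add_mod _ _
    have hb : ((p : ℕ) / k) * k + (p : ℕ) % k < n * (k + m) := by rw [hpe]; exact p.2
    have := hτA ((p : ℕ) / k) ((p : ℕ) % k) ha hc hb
    rwa [show (⟨((p : ℕ) / k) * k + (p : ℕ) % k, hb⟩ : Fin (n * (k + m))) = p from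
      Fin.ext hpe] at this
  -- value of τ on the B side
  have tauB : ∀ p : Fin (n * (k + m)), n * k ≤ (p : ℕ) →
      (τ p : ℕ) = (((p : ℕ) - n * k) / m) * (k + m) + k + ((p : ℕ) - n * k) % m := by
    intro p hp
    have hylt : (p : ℕ) - n * k < n * m := by have := p.2; omega
    have hb' : ((p : ℕ) - n * k) / m < n := Nat.div_lt_of_lt_mul (by omega)
    have hd : ((p : ℕ) - n * k) % m < m := Nat.mod_lt _ hm'
    have hye : (((p : ℕ) - n * k) / m) * m + ((p : ℕ) - n * k) % m = (p : ℕ) - n * k := by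
      rw [mul_comm]; exact Nat.div_add_mod _ _
    have hval : n * k + (((p : ℕ) - n * k) / m) * m + ((p : ℕ) - n * k) % m = (p : ℕ) := by
      omega
    have hbnd : n * k + (((p : ℕ) - n * k) / m) * m + ((p : ℕ) - n * k) % m < n * (k + m) := by
      have := p.2; omega
    have := hτB (((p : ℕ) - n * k) / m) (((p : ℕ) - n * k) % m) hb' hd hbnd
    rwa [show (⟨n * k + (((p : ℕ) - n * k) / m) * m + ((p : ℕ) - n * k) % m, hbnd⟩ :
      Fin (n * (k + m))) = p from Fin.ext hval] at this
  -- inversion count of τ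
  have hcount : (invSet τ).card = (n * (n - 1) / 2) * (k * m) := by
    have hbij : (((Finset.range n ×ˢ Finset.range n).filter fun ab => ab.2 < ab.1) ×ˢ
        (Finset.range k ×ˢ Finset.range m)).card = (invSet τ).card := by
      refine Finset.card_bij (fun x hx =>
        (⟨x.1.1 * k + x.2.1, by
          simp only [Finset.mem_product, Finset.mem_filter, Finset.mem_range] at hx
          have h1 : (x.1.1 + 1) * k ≤ n * k := Nat.mul_le_mul_right _ (by omega)
          have h2 : (x.1.1 + 1) * k = x.1.1 * k + k := by ring
          omega⟩,
        ⟨n * k + x.1.2 * m + x.2.2, by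
          simp only [Finset.mem_product, Finset.mem_filter, Finset.mem_range] at hx
          have h1 : (x.1.2 + 1) * m ≤ n * m := Nat.mul_le_mul_right _ (by omega)
          have h2 : (x.1.2 + 1) * m = x.1.2 * m + m := by ring
          omega⟩)) ?_ ?_ ?_
      · -- maps into invSet τ
        rintro ⟨⟨a, b⟩, ⟨c, d⟩⟩ hx
        simp only [Finset.mem_product, Finset.mem_filter, Finset.mem_range] at hx
        obtain ⟨⟨⟨ha, hb⟩, hba⟩, hc, hd⟩ := hx
        rw [mem_invSet]
        constructor
        · simp only [Fin.lt_def]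
          have h1 : (a + 1) * k ≤ n * k := Nat.mul_le_mul_right _ (by omega)
          have h2 : (a + 1) * k = a * k + k := by ring
          omega
        · simp only [Fin.lt_def]
          have e1 := hτA a c ha hc (by
            have h1 : (a + 1) * k ≤ n * k := Nat.mul_le_mul_right _ (by omega)
            have h2 : (a + 1) * k = a * k + k := by ring
            omega)
          have e2 := hτB b d hb hd (by
            have h1 : (b + 1) * m ≤ n * m := Nat.mul_le_mul_right _ (by omega)
            have h2 : (b + 1) * m = b * m + m := by ring
            omega)
          rw [e1, e2]
          have h3 : (b + 1) * (k + m) ≤ a * (k + m) := Nat.mul_le_mul_right _ (by omega)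
          have h4 : (b + 1) * (k + m) = b * (k + m) + (k + m) := by ring
          omega
      · -- injective
        rintro ⟨⟨a, b⟩, ⟨c, d⟩⟩ hx ⟨⟨a', b'⟩, ⟨c', d'⟩⟩ hy hxy
        simp only [Finset.mem_product, Finset.mem_filter, Finset.mem_range] at hx hy
        simp only [Prod.mk.injEq, Fin.mk.injEq] at hxy
        obtain ⟨h1, h2⟩ := hxy
        have e1 := div_mod_split hk' a c a' c' hx.2.1 hy.2.1 h1
        have e2 := div_mod_split hm' b d b' d' hx.2.2 hy.2.2 (by omega)
        simp only [Prod.mk.injEq]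
        exact ⟨⟨e1.1, e2.1⟩, e1.2, e2.2⟩
      · -- surjective
        rintro ⟨p, q⟩ hpq
        rw [mem_invSet] at hpq
        obtain ⟨hlt, hinv⟩ := hpq
        dsimp only at hlt hinv
        rw [Fin.lt_def] at hlt
        have hinv' : (τ q : ℕ) < (τ p : ℕ) := hinv
        clear hinv
        by_cases hq : (q : ℕ) < n * k
        · -- both on the A side : contradiction
          exfalso
          have hp : (p : ℕ) < n * k := lt_trans hlt hq
          have e1 := tauA p hp
          have e2 := tauA q hq
          have hp1 : ((p : ℕ) / k) * k + (p : ℕ) % k = (p : ℕ) := by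
            rw [mul_comm]; exact Nat.div_add_mod _ _
          have hq1 : ((q : ℕ) / k) * k + (q : ℕ) % k = (q : ℕ) := by
            rw [mul_comm]; exact Nat.div_add_mod _ _
          have hmono := blocks_mono (K := k) (M := k + m) (by omega)
            ((p : ℕ) / k) ((p : ℕ) % k) ((q : ℕ) / k) ((q : ℕ) % k)
            (Nat.mod_lt _ hk') (Nat.mod_lt _ hk') (by omega)
          omega
        · by_cases hp : (p : ℕ) < n * k
          · -- p on the A side, q on the B side : genuine inversion
            push_neg at hq
            have ha : (p : ℕ) / k < n := Nat.div_lt_of_lt_mul (by omega)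
            have hc : (p : ℕ) % k < k := Nat.mod_lt _ hk'
            have hylt : (q : ℕ) - n * k < n * m := by have := q.2; omega
            have hb : ((q : ℕ) - n * k) / m < n := Nat.div_lt_of_lt_mul (by omega)
            have hd : ((q : ℕ) - n * k) % m < m := Nat.mod_lt _ hm'
            have hpe : ((p : ℕ) / k) * k + (p : ℕ) % k = (p : ℕ) := by
              rw [mul_comm]; exact Nat.div_add_mod _ _
            have hqe : (((q : ℕ) - n * k) / m) * m + ((q : ℕ) - n * k) % m
                = (q : ℕ) - n * k := by
              rw [mul_comm]; exact Nat.div_add_mod _ _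
            have e1 := tauA p hp
            have e2 := tauB q hq
            have hba : ((q : ℕ) - n * k) / m < (p : ℕ) / k := by
              by_contra hab
              push_neg at hab
              have h3 : ((p : ℕ) / k) * (k + m) ≤ (((q : ℕ) - n * k) / m) * (k + m) :=
                Nat.mul_le_mul_right _ hab
              omega
            refine ⟨(((p : ℕ) / k, ((q : ℕ) - n * k) / m), ((p : ℕ) % k, ((q : ℕ) - n * k) % m)),
              ?_, ?_⟩
            · simp only [Finset.mem_product, Finset.mem_filter, Finset.mem_range]
              exact ⟨⟨⟨ha, hb⟩, hba⟩, hc, hd⟩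
            · simp only [Prod.mk.injEq]
              have hqval : n * k + (((q : ℕ) - n * k) / m) * m + ((q : ℕ) - n * k) % m
                  = (q : ℕ) := by omega
              exact ⟨Fin.ext hpe, Fin.ext hqval⟩
          · -- both on the B side : contradiction
            exfalso
            push_neg at hp hq
            have e1 := tauB p hp
            have e2 := tauB q hq
            have hp1 : (((p : ℕ) - n * k) / m) * m + ((p : ℕ) - n * k) % m
                = (p : ℕ) - n * k := by
              rw [mul_comm]; exact Nat.div_add_mod _ _
            have hq1 : (((q : ℕ) - n * k) / m) * m + ((q : ℕ) - n * k) % m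
                = (q : ℕ) - n * k := by
              rw [mul_comm]; exact Nat.div_add_mod _ _
            have hmono := blocks_mono (K := m) (M := k + m) (by omega)
              (((p : ℕ) - n * k) / m) (((p : ℕ) - n * k) % m)
              (((q : ℕ) - n * k) / m) (((q : ℕ) - n * k) % m)
              (Nat.mod_lt _ hm') (Nat.mod_lt _ hm') (by omega)
            omega
    rw [← hbij, Finset.card_product, Finset.card_product, card_lt_pairs,
      Finset.card_range, Finset.card_range]
  obtain ⟨L, hL1, hL2, hL3⟩ := exists_adj_list ((invSet τ).card) τ rfl
  exact ⟨L, by rw [hL1, hcount]; ring, hL2, hL3⟩
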